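/- The linear discrete-time system (A) is P-nonuniformly exponentially dichotomic if and only if there exist a constant d>0 and a sequence S:ℕ→(0,∞) such that for all natural numbers m ≥ n ≥ p and all x ∈ X, the series Σ_{j=n}^{∞} e^{d(j−n)}‖𝒜_P(j,p)x‖ converges and Σ_{j=n}^{∞} e^{d(j−n)}‖𝒜_P(j,p)x‖ + Σ_{k=n}^{m} e^{d(m−k)}‖𝒜_Q(k,n)x‖ ≤ S(n)‖𝒜_P(n,p)x‖ + S(m)‖𝒜_Q(m,n)x‖. -/

import Mathlib

open Real

/-- The evolution operator started at time `n`, after `k` steps: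
`A(n+k) ⋯ A(n+1)`. -/
noncomputable def evolFrom {X : Type*} [NormedAddCommGroup X] [NormedSpace ℝ X]
    (A : ℕ → X →L[ℝ] X) (n : ℕ) : ℕ → X →L[ℝ] X
  | 0 => 1
  | k + 1 => (A (n + k + 1)).comp (evolFrom A n k)

/-- The evolution operator `𝒜(m,n) = A(m) ⋯ A(n+1)` for `m ≥ n`, `𝒜(n,n) = I`. -/
noncomputable def evol {X : Type*} [NormedAddCommGroup X] [NormedSpace ℝ X]
    (A : ℕ → X →L[ℝ] X) (m n : ℕ) : X →L[ℝ] X :=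
  evolFrom A n (m - n)

/-- `𝒜_P(m,n) = 𝒜(m,n) P(n)`. -/
noncomputable def evolP {X : Type*} [NormedAddCommGroup X] [NormedSpace ℝ X]
    (A P : ℕ → X →L[ℝ] X) (m n : ℕ) : X →L[ℝ] X :=
  (evol A m n).comp (P n)

/-- `𝒜_Q(m,n) = 𝒜(m,n) Q(n)` where `Q(n) = I - P(n)`. -/
noncomputable def evolQ {X : Type*} [NormedAddCommGroup X] [NormedSpace ℝ X]
    (A P : ℕ → X →L[ℝ] X) (m n : ℕ) : X →L[ℝ] X :=
  (evol A m n).comp (1 - P n)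

/-- The system is P-nonuniformly exponentially dichotomic. -/
def IsNED {X : Type*} [NormedAddCommGroup X] [NormedSpace ℝ X]
    (A P : ℕ → X →L[ℝ] X) : Prop :=
  ∃ α : ℝ, 0 < α ∧ ∃ N : ℕ → ℝ, (∀ n, 0 < N n) ∧ Monotone N ∧
    ∀ m n : ℕ, n ≤ m → ∀ x : X,
      exp (α * ((m : ℝ) - n)) * (‖evolP A P m n x‖ + ‖(1 - P n) x‖) ≤
        N n * ‖P n x‖ + N m * ‖evolQ A P m n x‖

section Helpers
variable {X : Type*} [NormedAddCommGroup X] [NormedSpace ℝ X]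
variable (A P : ℕ → X →L[ℝ] X)

lemma evol_self (n : ℕ) : evol A n n = 1 := by
  simp [evol, Nat.sub_self, evolFrom]

lemma evol_succ (m n : ℕ) (h : n ≤ m) :
    evol A (m + 1) n = (A (m + 1)).comp (evol A m n) := by
  have h1 : m + 1 - n = (m - n) + 1 := by omega
  have h2 : n + (m - n) + 1 = m + 1 := by omega
  show evolFrom A n (m + 1 - n) = _
  rw [h1]
  show (A (n + (m - n) + 1)).comp (evolFrom A n (m - n)) = _
  rw [h2]
  rfl

lemma evol_comp_apply (m n p : ℕ) (hpn : p ≤ n) (hnm : n ≤ m) (x : X) :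
    evol A m n (evol A n p x) = evol A m p x := by
  induction m, hnm using Nat.le_induction with
  | base => simp [evol_self]
  | succ m hm ih =>
    rw [evol_succ A m n hm, evol_succ A m p (hpn.trans hm)]
    simp [ContinuousLinearMap.comp_apply, ih]

variable {A P} in
lemma P_idem (hProj : ∀ n, (P n).comp (P n) = P n) (n : ℕ) (x : X) : P n (P n x) = P n x := by
  have := congrArg (fun T : X →L[ℝ] X => T x) (hProj n)
  simpa using this

lemma evol_P_comm (hCompat : ∀ n, (A (n + 1)).comp (P n) = (P (n + 1)).comp (A (n + 1))) (m n : ℕ) (h : n ≤ m) (x : X) :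
    evol A m n (P n x) = P m (evol A m n x) := by
  induction m, h using Nat.le_induction with
  | base => simp [evol_self]
  | succ m hm ih =>
    rw [evol_succ A m n hm]
    simp only [ContinuousLinearMap.comp_apply, ih]
    have := congrArg (fun T : X →L[ℝ] X => T (evol A m n x)) (hCompat m)
    simpa using this

lemma P_evolP (hProj : ∀ n, (P n).comp (P n) = P n) (hCompat : ∀ n, (A (n + 1)).comp (P n) = (P (n + 1)).comp (A (n + 1))) (n p : ℕ) (hpn : p ≤ n) (x : X) :
    P n (evolP A P n p x) = evolP A P n p x := by
  simp only [evolP, ContinuousLinearMap.comp_apply]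
  rw [evol_P_comm A P hCompat n p hpn x, P_idem hProj]

lemma Q_evolP (hProj : ∀ n, (P n).comp (P n) = P n) (hCompat : ∀ n, (A (n + 1)).comp (P n) = (P (n + 1)).comp (A (n + 1))) (n p : ℕ) (hpn : p ≤ n) (x : X) :
    (1 - P n) (evolP A P n p x) = 0 := by
  simp only [ContinuousLinearMap.sub_apply, ContinuousLinearMap.one_apply]
  rw [P_evolP A P hProj hCompat n p hpn, sub_self]

lemma evolP_comp (hProj : ∀ n, (P n).comp (P n) = P n) (hCompat : ∀ n, (A (n + 1)).comp (P n) = (P (n + 1)).comp (A (n + 1))) (m n p : ℕ) (hpn : p ≤ n) (hnm : n ≤ m) (x : X) :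
    evolP A P m n (evolP A P n p x) = evolP A P m p x := by
  show (evol A m n) (P n (evolP A P n p x)) = _
  rw [P_evolP A P hProj hCompat n p hpn]
  show evol A m n (evol A n p ((P p) x)) = evol A m p ((P p) x)
  rw [evol_comp_apply A m n p hpn hnm]

lemma P_evolQ (hProj : ∀ n, (P n).comp (P n) = P n) (hCompat : ∀ n, (A (n + 1)).comp (P n) = (P (n + 1)).comp (A (n + 1))) (k n : ℕ) (hnk : n ≤ k) (x : X) :
    P k (evolQ A P k n x) = 0 := by
  simp only [evolQ, ContinuousLinearMap.comp_apply]
  rw [← evol_P_comm A P hCompat k n hnk]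
  have : P n ((1 - P n) x) = 0 := by
    simp only [ContinuousLinearMap.sub_apply, ContinuousLinearMap.one_apply, map_sub]
    rw [P_idem hProj, sub_self]
  rw [this, map_zero]

lemma Q_evolQ (hProj : ∀ n, (P n).comp (P n) = P n) (hCompat : ∀ n, (A (n + 1)).comp (P n) = (P (n + 1)).comp (A (n + 1))) (k n : ℕ) (hnk : n ≤ k) (x : X) :
    (1 - P k) (evolQ A P k n x) = evolQ A P k n x := by
  simp only [ContinuousLinearMap.sub_apply, ContinuousLinearMap.one_apply]
  rw [P_evolQ A P hProj hCompat k n hnk, sub_zero]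

lemma evolQ_comp (hProj : ∀ n, (P n).comp (P n) = P n) (hCompat : ∀ n, (A (n + 1)).comp (P n) = (P (n + 1)).comp (A (n + 1))) (m k n : ℕ) (hnk : n ≤ k) (hkm : k ≤ m) (x : X) :
    evolQ A P m k (evolQ A P k n x) = evolQ A P m n x := by
  show (evol A m k) ((1 - P k) (evolQ A P k n x)) = _
  rw [Q_evolQ A P hProj hCompat k n hnk]
  show evol A m k (evol A k n ((1 - P n) x)) = evol A m n ((1 - P n) x)
  rw [evol_comp_apply A m k n hnk hkm]

lemma evolP_evolQ (hProj : ∀ n, (P n).comp (P n) = P n) (hCompat : ∀ n, (A (n + 1)).comp (P n) = (P (n + 1)).comp (A (n + 1))) (m k n : ℕ) (hnk : n ≤ k) (x : X) :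
    evolP A P m k (evolQ A P k n x) = 0 := by
  show (evol A m k) (P k (evolQ A P k n x)) = 0
  rw [P_evolQ A P hProj hCompat k n hnk, map_zero]

lemma evolQ_evolP (hProj : ∀ n, (P n).comp (P n) = P n) (hCompat : ∀ n, (A (n + 1)).comp (P n) = (P (n + 1)).comp (A (n + 1))) (m n p : ℕ) (hpn : p ≤ n) (x : X) :
    evolQ A P m n (evolP A P n p x) = 0 := by
  show (evol A m n) ((1 - P n) (evolP A P n p x)) = 0
  rw [Q_evolP A P hProj hCompat n p hpn, map_zero]

end Helpers

lemma sum_pow_sub_le {r : ℝ} (h0 : 0 ≤ r) (h1 : r < 1) (n m : ℕ) :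
    ∑ k ∈ Finset.Icc n m, r ^ (m - k) ≤ (1 - r)⁻¹ := by
  have hinj : ∀ a ∈ Finset.Icc n m, ∀ b ∈ Finset.Icc n m, m - a = m - b → a = b := by
    intro a ha b hb h
    simp only [Finset.mem_Icc] at ha hb
    omega
  calc ∑ k ∈ Finset.Icc n m, r ^ (m - k)
      = ∑ i ∈ (Finset.Icc n m).image (fun k => m - k), r ^ i :=
        (Finset.sum_image hinj).symm
    _ ≤ ∑' i : ℕ, r ^ i :=
        Summable.sum_le_tsum _ (fun i _ => pow_nonneg h0 i) (summable_geometric_of_lt_one h0 h1)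
    _ = (1 - r)⁻¹ := tsum_geometric_of_lt_one h0 h1

/-- Theorem 1 (characterization of nonuniform exponential dichotomy). -/
theorem nonuniform_exponential_dichotomy_iff
    {X : Type*} [NormedAddCommGroup X] [NormedSpace ℝ X] [CompleteSpace X]
    (A P : ℕ → X →L[ℝ] X)
    (hProj : ∀ n, (P n).comp (P n) = P n)
    (hCompat : ∀ n, (A (n + 1)).comp (P n) = (P (n + 1)).comp (A (n + 1))) :
    IsNED A P ↔
      ∃ d : ℝ, 0 < d ∧ ∃ S : ℕ → ℝ, (∀ n, 0 < S n) ∧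
        ∀ m n p : ℕ, p ≤ n → n ≤ m → ∀ x : X,
          Summable (fun j : ℕ => exp (d * j) * ‖evolP A P (n + j) p x‖) ∧
          (∑' j : ℕ, exp (d * j) * ‖evolP A P (n + j) p x‖) +
              ∑ k ∈ Finset.Icc n m, exp (d * ((m : ℝ) - k)) * ‖evolQ A P k n x‖ ≤
            S n * ‖evolP A P n p x‖ + S m * ‖evolQ A P m n x‖ := by
  constructor
  · rintro ⟨α, hα, N, hNpos, hNmono, hN⟩
    set d := α / 2 with hd
    have hdpos : 0 < d := by positivity
    set r := exp (-d) with hr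
    have hr0 : 0 ≤ r := (exp_pos _).le
    have hr1 : r < 1 := by
      rw [hr, exp_lt_one_iff]
      linarith
    have hr1' : 0 < 1 - r := by linarith
    refine ⟨d, hdpos, fun n => N n * (1 - r)⁻¹, fun n => mul_pos (hNpos n) (inv_pos.mpr hr1'), ?_⟩
    intro m n p hpn hnm x
    -- key bound on P terms
    have key1 : ∀ j : ℕ, exp (d * j) * ‖evolP A P (n + j) p x‖ ≤
        r ^ j * (N n * ‖evolP A P n p x‖) := by
      intro j
      have h := hN (n + j) n (Nat.le_add_right n j) (evolP A P n p x)
      rw [evolP_comp A P hProj hCompat (n + j) n p hpn (Nat.le_add_right n j),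
        Q_evolP A P hProj hCompat n p hpn,
        evolQ_evolP A P hProj hCompat (n + j) n p hpn,
        P_evolP A P hProj hCompat n p hpn] at h
      simp only [norm_zero, add_zero, mul_zero] at h
      have hcast : ((n + j : ℕ) : ℝ) - n = (j : ℝ) := by push_cast; ring
      rw [hcast] at h
      have e1 : exp (-(d * j)) * exp (α * j) = exp (d * j) := by
        rw [← exp_add]
        congr 1
        rw [hd]; ring
      calc exp (d * j) * ‖evolP A P (n + j) p x‖
          = exp (-(d * j)) * (exp (α * j) * ‖evolP A P (n + j) p x‖) := by
            rw [← mul_assoc, e1]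
        _ ≤ exp (-(d * j)) * (N n * ‖evolP A P n p x‖) :=
            mul_le_mul_of_nonneg_left h (exp_pos _).le
        _ = r ^ j * (N n * ‖evolP A P n p x‖) := by
            rw [hr, ← Real.exp_nat_mul]
            congr 2
            ring
    -- key bound on Q terms
    have key2 : ∀ k ∈ Finset.Icc n m, exp (d * ((m : ℝ) - k)) * ‖evolQ A P k n x‖ ≤
        r ^ (m - k) * (N m * ‖evolQ A P m n x‖) := by
      intro k hk
      simp only [Finset.mem_Icc] at hk
      obtain ⟨hnk, hkm⟩ := hk
      have h := hN m k hkm (evolQ A P k n x)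
      rw [evolP_evolQ A P hProj hCompat m k n hnk,
        Q_evolQ A P hProj hCompat k n hnk,
        evolQ_comp A P hProj hCompat m k n hnk hkm,
        P_evolQ A P hProj hCompat k n hnk] at h
      simp only [norm_zero, zero_add, mul_zero, zero_add] at h
      have e1 : exp (-(d * ((m : ℝ) - k))) * exp (α * ((m : ℝ) - k)) =
          exp (d * ((m : ℝ) - k)) := by
        rw [← exp_add]
        congr 1
        rw [hd]; ring
      calc exp (d * ((m : ℝ) - k)) * ‖evolQ A P k n x‖
          = exp (-(d * ((m : ℝ) - k))) *
              (exp (α * ((m : ℝ) - k)) * ‖evolQ A P k n x‖) := by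
            rw [← mul_assoc, e1]
        _ ≤ exp (-(d * ((m : ℝ) - k))) * (N m * ‖evolQ A P m n x‖) :=
            mul_le_mul_of_nonneg_left h (exp_pos _).le
        _ = r ^ (m - k) * (N m * ‖evolQ A P m n x‖) := by
            rw [hr, ← Real.exp_nat_mul]
            congr 2
            rw [Nat.cast_sub hkm]
            ring
    have hgsum : Summable (fun j : ℕ => r ^ j * (N n * ‖evolP A P n p x‖)) :=
      (summable_geometric_of_lt_one hr0 hr1).mul_right _
    have hsum : Summable (fun j : ℕ => exp (d * j) * ‖evolP A P (n + j) p x‖) :=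
      Summable.of_nonneg_of_le (fun j => by positivity) key1 hgsum
    refine ⟨hsum, ?_⟩
    have h1 : (∑' j : ℕ, exp (d * j) * ‖evolP A P (n + j) p x‖) ≤
        (1 - r)⁻¹ * (N n * ‖evolP A P n p x‖) := by
      calc (∑' j : ℕ, exp (d * j) * ‖evolP A P (n + j) p x‖)
          ≤ ∑' j : ℕ, r ^ j * (N n * ‖evolP A P n p x‖) :=
            Summable.tsum_le_tsum key1 hsum hgsum
        _ = (∑' j : ℕ, r ^ j) * (N n * ‖evolP A P n p x‖) := tsum_mul_right
        _ = (1 - r)⁻¹ * (N n * ‖evolP A P n p x‖) := by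
            rw [tsum_geometric_of_lt_one hr0 hr1]
    have h2 : (∑ k ∈ Finset.Icc n m, exp (d * ((m : ℝ) - k)) * ‖evolQ A P k n x‖) ≤
        (1 - r)⁻¹ * (N m * ‖evolQ A P m n x‖) := by
      calc (∑ k ∈ Finset.Icc n m, exp (d * ((m : ℝ) - k)) * ‖evolQ A P k n x‖)
          ≤ ∑ k ∈ Finset.Icc n m, r ^ (m - k) * (N m * ‖evolQ A P m n x‖) :=
            Finset.sum_le_sum key2
        _ = (∑ k ∈ Finset.Icc n m, r ^ (m - k)) * (N m * ‖evolQ A P m n x‖) := by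
            rw [Finset.sum_mul]
        _ ≤ (1 - r)⁻¹ * (N m * ‖evolQ A P m n x‖) := by
            exact mul_le_mul_of_nonneg_right (sum_pow_sub_le hr0 hr1 n m)
              (mul_nonneg (hNpos m).le (norm_nonneg _))
    calc (∑' j : ℕ, exp (d * j) * ‖evolP A P (n + j) p x‖) +
            ∑ k ∈ Finset.Icc n m, exp (d * ((m : ℝ) - k)) * ‖evolQ A P k n x‖
        ≤ (1 - r)⁻¹ * (N n * ‖evolP A P n p x‖) +
            (1 - r)⁻¹ * (N m * ‖evolQ A P m n x‖) := add_le_add h1 h2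
      _ = N n * (1 - r)⁻¹ * ‖evolP A P n p x‖ +
            N m * (1 - r)⁻¹ * ‖evolQ A P m n x‖ := by ring
  · rintro ⟨d, hd, S, hSpos, hS⟩
    refine ⟨d, hd, fun n => 2 * ∑ k ∈ Finset.range (n + 1), S k, ?_, ?_, ?_⟩
    · intro n
      have : 0 < ∑ k ∈ Finset.range (n + 1), S k :=
        Finset.sum_pos (fun i _ => hSpos i) (by simp)
      show 0 < 2 * ∑ k ∈ Finset.range (n + 1), S k
      linarith
    · intro a b hab
      have : ∑ k ∈ Finset.range (a + 1), S k ≤ ∑ k ∈ Finset.range (b + 1), S k :=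
        Finset.sum_le_sum_of_subset_of_nonneg
          (Finset.range_subset_range.mpr (by omega)) (fun i _ _ => (hSpos i).le)
      show 2 * ∑ k ∈ Finset.range (a + 1), S k ≤ 2 * ∑ k ∈ Finset.range (b + 1), S k
      linarith
    · intro m n hnm x
      obtain ⟨hsum, hle⟩ := hS m n n le_rfl hnm x
      have hPnn : evolP A P n n x = P n x := by
        simp [evolP, evol_self]
      have hQnn : evolQ A P n n x = (1 - P n) x := by
        simp [evolQ, evol_self]
      rw [hPnn] at hle
      have t1 : exp (d * ((m : ℝ) - n)) * ‖evolP A P m n x‖ ≤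
          ∑' j : ℕ, exp (d * j) * ‖evolP A P (n + j) n x‖ := by
        have h := Summable.le_tsum hsum (m - n) (fun j _ => mul_nonneg (exp_pos _).le (norm_nonneg _))
        rwa [Nat.add_sub_cancel' hnm, Nat.cast_sub hnm] at h
      have t2 : exp (d * ((m : ℝ) - n)) * ‖(1 - P n) x‖ ≤
          ∑ k ∈ Finset.Icc n m, exp (d * ((m : ℝ) - k)) * ‖evolQ A P k n x‖ := by
        have h := Finset.single_le_sum
          (f := fun k : ℕ => exp (d * ((m : ℝ) - (k : ℕ))) * ‖evolQ A P k n x‖)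
          (fun k _ => mul_nonneg (exp_pos _).le (norm_nonneg _))
          (Finset.mem_Icc.mpr ⟨le_rfl, hnm⟩)
        simpa only [hQnn] using h
      have hq : (0:ℝ) ≤ ‖evolQ A P m n x‖ := norm_nonneg _
      have hp : (0:ℝ) ≤ ‖P n x‖ := norm_nonneg _
      have hSn : S n ≤ ∑ k ∈ Finset.range (n + 1), S k :=
        Finset.single_le_sum (fun i _ => (hSpos i).le) (by simp)
      have hSm : S m ≤ ∑ k ∈ Finset.range (m + 1), S k :=
        Finset.single_le_sum (fun i _ => (hSpos i).le) (by simp)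
      have hSn0 : 0 < ∑ k ∈ Finset.range (n + 1), S k :=
        Finset.sum_pos (fun i _ => hSpos i) (by simp)
      have hSm0 : 0 < ∑ k ∈ Finset.range (m + 1), S k :=
        Finset.sum_pos (fun i _ => hSpos i) (by simp)
      show exp (d * ((m : ℝ) - n)) * (‖evolP A P m n x‖ + ‖(1 - P n) x‖) ≤
        2 * (∑ k ∈ Finset.range (n + 1), S k) * ‖P n x‖ +
          2 * (∑ k ∈ Finset.range (m + 1), S k) * ‖evolQ A P m n x‖
      rw [mul_add]
      linarith [t1, t2, hle, mul_le_mul_of_nonneg_right hSn hp,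
        mul_le_mul_of_nonneg_right hSm hq,
        mul_nonneg hSn0.le hp, mul_nonneg hSm0.le hq]
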